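/- Let (A,post) = (A_1,post_1) ⊗ ... ⊗ (A_n,post_n) be a safe product invariant domain, E a corresponding saturated empire, and ℓ a focus on E. Let P̂ be a subset of a reachable marking, t a transition with •t ⊆ P̂, and q, q' states of E with δ(q,t) = q'. Writing law_X(q) = ⋀_{p∈X} law_p(q) for a set X of places, the Hoare triple {law_P̂(q)} λ(t) {law_{(P̂\•t)∪t•}(q')} holds. -/

import Mathlib

/-!
Common semantic framework for "The Ghosts of Empires":
Petri programs, Hoare triples, invariant domains, Owicki-Gries annotations,
territories, empires, saturated empires, focus.
-/

namespace GhostsOfEmpires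

/-- Reachable states of a (partial) state machine with transition alphabet `T`. -/
inductive EmpReach {Q T : Type*} (q0 : Q) (δ : Q → T → Option Q) : Q → Prop
  | init : EmpReach q0 δ q0
  | step {q : Q} {t : T} {q' : Q} : EmpReach q0 δ q → δ q t = some q' → EmpReach q0 δ q'

/-- Restriction of a partial transition function to the reachable part. -/
def restrictδ {Q T : Type*} (q0 : Q) (δ : Q → T → Option Q)
    (q : {q : Q // EmpReach q0 δ q}) (t : T) : Option {q : Q // EmpReach q0 δ q} :=
  match h : δ q.val t with
  | none => none
  | some q' => some ⟨q', EmpReach.step q.property h⟩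

/-- A Petri program: places, transitions, flow relation (given by `pre`/`post`),
initial marking, statement labels, error places, and a semantics for statements
(formulas over the program variables are modelled semantically as predicates on `State`,
the type of valuations of the program variables). Since the program is assumed one-safe,
markings are identified with sets of places. -/
structure PetriNet (Place Trans Stmt State : Type*) where
  pre : Trans → Set Place
  post : Trans → Set Place
  mInit : Set Place
  label : Trans → Stmt
  err : Set Place
  sem : Stmt → State → State → Prop

/-- Owicki-Gries annotation: ghost state type `GS` (the product of the domains of the
ghost variables), invariant mapping `ω` (formulas over program and ghost variables),
ghost update mapping `γ` (executed after the statement of the transition), and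
initial ghost valuation `ρ`. -/
structure OG (Place Trans State GS : Type*) where
  ω : Place → State → GS → Prop
  γ : Trans → State → GS → GS
  ρ : GS

/-- The data of an empire: a state machine with laws and territories. -/
structure EmpireData (Place Trans State Q : Type*) where
  qInit : Q
  δ : Q → Trans → Option Q
  law : Q → State → Prop
  terr : Q → Set (Set Place)

/-- `Q_p`: the set of empire states whose territory contains `p` in some region. -/
def Qp {Place Trans State Q : Type*} (E : EmpireData Place Trans State Q) (p : Place) :
    Set Q :=
  {q | ∃ r ∈ E.terr q, p ∈ r}

/-- The imperial Owicki-Gries annotation of an empire: one ghost variable `g` ranging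
over the states `Q`, initialized to `qInit`, updated according to `δ`, and
`ω(p) = ⋁_{q ∈ Q_p} (g = q ∧ law q)`. -/
def imperialOG {Place Trans State Q : Type*} (E : EmpireData Place Trans State Q) :
    OG Place Trans State Q where
  ω := fun p s g => ∃ q ∈ Qp E p, g = q ∧ E.law q s
  γ := fun t _ g => (E.δ g t).getD g
  ρ := E.qInit

/-- Restriction of an empire given by raw data to its reachable part. -/
def restrictEmpire {Place Trans State Q : Type*} (q0 : Q) (δ0 : Q → Trans → Option Q)
    (law : Q → State → Prop) (terr : Q → Set (Set Place)) :
    EmpireData Place Trans State {q : Q // EmpReach q0 δ0 q} where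
  qInit := ⟨q0, EmpReach.init⟩
  δ := restrictδ q0 δ0
  law := fun q => law q.val
  terr := fun q => terr q.val

/-- `m ∈ ⟦τ⟧`: `m` is derived by taking exactly one place from each region of `τ`. -/
def InTreaty {Place : Type*} (τ : Set (Set Place)) (m : Set Place) : Prop :=
  ∃ f : Set Place → Place, (∀ r ∈ τ, f r ∈ r) ∧ m = {p | ∃ r ∈ τ, p = f r}

namespace PetriNet

variable {Place Trans Stmt State : Type*} (N : PetriNet Place Trans Stmt State)

/-- `m ▷t m'`: transition `t` is enabled in `m` and firing it yields `m'`. -/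
def fires (m : Set Place) (t : Trans) (m' : Set Place) : Prop :=
  N.pre t ⊆ m ∧ m' = (m \ N.pre t) ∪ N.post t

/-- Firing sequences. -/
inductive FiringSeq : Set Place → List Trans → Set Place → Prop
  | nil (m : Set Place) : FiringSeq m [] m
  | cons {m m' m'' : Set Place} {t : Trans} {ts : List Trans} :
      N.fires m t m' → FiringSeq m' ts m'' → FiringSeq m (t :: ts) m''

/-- A marking is reachable if some firing sequence from the initial marking ends in it. -/
def Reachable (m : Set Place) : Prop := ∃ ts, N.FiringSeq N.mInit ts m

/-- The Hoare triple `{φ} st {ψ}` holds. -/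
def Hoare (φ : State → Prop) (st : Stmt) (ψ : State → Prop) : Prop :=
  ∀ s s', φ s → N.sem st s s' → ψ s'

/-- Semantics of a sequence of statements. -/
inductive SeqSem : List Stmt → State → State → Prop
  | nil (s : State) : SeqSem [] s s
  | cons {st : Stmt} {sts : List Stmt} {s s' s'' : State} :
      N.sem st s s' → SeqSem sts s' s'' → SeqSem (st :: sts) s s''

/-- The Petri program is correct: for every firing sequence reaching a marking that
contains an error place, the Hoare triple `{⊤} λ(t1)...λ(tn) {⊥}` holds. -/
def Correct : Prop :=
  ∀ ts m, N.FiringSeq N.mInit ts m → (m ∩ N.err).Nonempty →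
    ∀ s s', N.SeqSem (List.map N.label ts) s s' → False

/-- `p` and `t` are co-marked. -/
def coMarked (p : Place) (t : Trans) : Prop :=
  p ∉ N.pre t ∧ ∃ m, N.Reachable m ∧ p ∈ m ∧ N.pre t ⊆ m

/-- Two places are co-related. -/
def coRelated (p p' : Place) : Prop :=
  p ≠ p' ∧ ∃ m, N.Reachable m ∧ p ∈ m ∧ p' ∈ m

/-- A region: a nonempty set of places that are pairwise not co-related. -/
def IsRegion (r : Set Place) : Prop :=
  r.Nonempty ∧ ∀ p1 ∈ r, ∀ p2 ∈ r, ¬ N.coRelated p1 p2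

/-- A territory: a set of pairwise disjoint regions all of whose treaty members are
reachable markings. -/
def IsTerritory (τ : Set (Set Place)) : Prop :=
  (∀ r ∈ τ, N.IsRegion r) ∧
  (∀ r1 ∈ τ, ∀ r2 ∈ τ, r1 ≠ r2 → r1 ∩ r2 = ∅) ∧
  (∀ m, InTreaty τ m → N.Reachable m)

/-- `t` is enabled in the territory `τ`: every predecessor place lies in a distinct
region of `τ`. -/
def terrEnabled (t : Trans) (τ : Set (Set Place)) : Prop :=
  ∃ f : Place → Set Place, (∀ p ∈ N.pre t, f p ∈ τ ∧ p ∈ f p) ∧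
    ∀ p1 ∈ N.pre t, ∀ p2 ∈ N.pre t, p1 ≠ p2 → f p1 ≠ f p2

/-- `τ ▷t τ'`: the firing relation on territories. -/
def terrFires (τ : Set (Set Place)) (t : Trans) (τ' : Set (Set Place)) : Prop :=
  ∃ f f' : Place → Set Place,
    (∀ p ∈ N.pre t, f p ∈ τ ∧ p ∈ f p) ∧
    (∀ p1 ∈ N.pre t, ∀ p2 ∈ N.pre t, p1 ≠ p2 → f p1 ≠ f p2) ∧
    (∀ p ∈ N.post t, N.IsRegion (f' p) ∧ p ∈ f' p) ∧
    (∀ p1 ∈ N.post t, ∀ p2 ∈ N.post t, p1 ≠ p2 → f' p1 ≠ f' p2) ∧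
    τ' = (τ \ {r | ∃ p ∈ N.pre t, r = f p}) ∪ {r | ∃ p ∈ N.post t, r = f' p}

/-- The bystander regions of `t` in `τ`. -/
def bystanders (t : Trans) (τ : Set (Set Place)) : Set (Set Place) :=
  {r ∈ τ | r ∩ N.pre t = ∅}

/-- The replaced territory `replace(t,τ)`. -/
def replaceT (t : Trans) (τ : Set (Set Place)) : Set (Set Place) :=
  N.bystanders t τ ∪ {r | ∃ p ∈ N.post t, r = {p}}

/-- `τ` is extendable with `t`. -/
def extendable (t : Trans) (τ : Set (Set Place)) : Prop :=
  N.terrEnabled t τ ∧ (∃ p, N.pre t = {p}) ∧ (∃ p', N.post t = {p'}) ∧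
    ∀ r ∈ τ, (r ∩ N.pre t).Nonempty → ∀ p'' ∈ r, ∀ p' ∈ N.post t, ¬ N.coRelated p' p''

/-- The extended territory `extend(t,τ)`: the (unique) region meeting `•t` is enlarged
by the successor place. -/
def extendT (t : Trans) (τ : Set (Set Place)) : Set (Set Place) :=
  N.bystanders t τ ∪ {r' | ∃ r ∈ τ, (r ∩ N.pre t).Nonempty ∧ r' = r ∪ N.post t}

/-- An invariant domain for `N`: a finite set `A` of formulas (modelled semantically)
containing `⊥` and `⊤`, and a post operator such that `{φ} λ(t) {post(φ,t)}` always holds. -/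
structure InvDomain where
  A : Set (State → Prop)
  postF : (State → Prop) → Trans → (State → Prop)
  finA : A.Finite
  bot_mem : (fun _ => False) ∈ A
  top_mem : (fun _ => True) ∈ A
  post_mem : ∀ φ ∈ A, ∀ t, postF φ t ∈ A
  post_hoare : ∀ φ ∈ A, ∀ t, N.Hoare φ (N.label t) (postF φ t)

/-- Reachable abstract configurations, generically over a type `Φ` of laws with a post
operator `postA` and top element `φtop`. -/
inductive AbsReachG {Φ : Type*} (postA : Φ → Trans → Φ) (φtop : Φ) : Set Place → Φ → Prop
  | init : AbsReachG postA φtop N.mInit φtop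
  | step {m : Set Place} {φ : Φ} {t : Trans} {m' : Set Place} :
      AbsReachG postA φtop m φ → N.fires m t m' → AbsReachG postA φtop m' (postA φ t)

/-- The invariant domain is safe: every reachable abstract configuration at a marking
containing an error place has law equivalent to `⊥`. -/
def SafeDomain (D : InvDomain N) : Prop :=
  ∀ m φ, N.AbsReachG D.postF (fun _ => True) m φ → (m ∩ N.err).Nonempty → ∀ s, ¬ φ s

/-- Validity of an Owicki-Gries annotation: initial, inductive, interference-free, safe. -/
structure OGValid {GS : Type*} (og : OG Place Trans State GS) : Prop where
  initialCond : ∀ p ∈ N.mInit, ∀ s, og.ω p s og.ρ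
  inductiveCond : ∀ t s g s', (∀ p ∈ N.pre t, og.ω p s g) →
    N.sem (N.label t) s s' → ∀ p ∈ N.post t, og.ω p s' (og.γ t s' g)
  interferenceFree : ∀ t p, N.coMarked p t → ∀ s g s',
    og.ω p s g → (∀ p' ∈ N.pre t, og.ω p' s g) →
    N.sem (N.label t) s s' → og.ω p s' (og.γ t s' g)
  safeCond : ∀ p ∈ N.err, ∀ s g, ¬ og.ω p s g

/-- The naive Owicki-Gries annotation `OG_naive(A,post)`: the ghost state is the set of
places `p` whose boolean ghost variable `g_p` is true; `ω(p)` is the disjunction over all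
reachable markings `m` containing `p` of `χ(m) ∧ β(m)`. -/
def naiveOG (D : InvDomain N) : OG Place Trans State (Set Place) where
  ω := fun p s g => ∃ m, N.Reachable m ∧ p ∈ m ∧ g = m ∧
    ∃ φ, N.AbsReachG D.postF (fun _ => True) m φ ∧ φ s
  γ := fun t _ g => (g \ (N.pre t \ N.post t)) ∪ (N.post t \ N.pre t)
  ρ := N.mInit

/-- Validity of an empire. -/
structure ValidEmpire {Q : Type*} (E : EmpireData Place Trans State Q) : Prop where
  terrOK : ∀ q, N.IsTerritory (E.terr q)
  initialLaw : ∀ s, E.law E.qInit s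
  initialTerr : InTreaty (E.terr E.qInit) N.mInit
  inductiveLaw : ∀ q t, N.terrEnabled t (E.terr q) →
    (∃ q', E.δ q t = some q' ∧ N.Hoare (E.law q) (N.label t) (E.law q')) ∨
      N.Hoare (E.law q) (N.label t) (fun _ => False)
  inductiveTerr : ∀ q t q', E.δ q t = some q' → N.terrFires (E.terr q) t (E.terr q')
  safeCond : ∀ q, (∃ r ∈ E.terr q, (r ∩ N.err).Nonempty) → ∀ s, ¬ E.law q s

/-- The initial territory `τ_init = {{p} | p ∈ m_init}`. -/
def tauInit : Set (Set Place) := {r | ∃ p ∈ N.mInit, r = {p}}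

/-- `SaturateG postA φ rb τ τ'` means `τ' ∈ saturate(φ, rb, τ)` (saturated successors). -/
inductive SaturateG {Φ : Type*} (postA : Φ → Trans → Φ) (φ : Φ) (rb : Set (Set Place)) :
    Set (Set Place) → Set (Set Place) → Prop
  | base {τ : Set (Set Place)} :
      (¬ ∃ t, N.extendable t τ ∧ ¬ N.terrFires τ t τ ∧ postA φ t = φ ∧
        rb ⊆ N.bystanders t τ) →
      SaturateG postA φ rb τ τ
  | step {τ : Set (Set Place)} {t : Trans} {τ' : Set (Set Place)} :
      N.extendable t τ → ¬ N.terrFires τ t τ → postA φ t = φ →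
      rb ⊆ N.bystanders t τ → SaturateG postA φ rb (N.extendT t τ) τ' →
      SaturateG postA φ rb τ τ'

/-- `(q0, δ0)` is the data of a saturated empire (before restriction to the reachable
part), generically over a type `Φ` of laws with post operator `postA`, interpretation
`interp` and top element `φtop`. -/
structure IsSaturatedG {Φ : Type*} (postA : Φ → Trans → Φ) (interp : Φ → State → Prop)
    (φtop : Φ) (q0 : Set (Set Place) × Φ)
    (δ0 : Set (Set Place) × Φ → Trans → Option (Set (Set Place) × Φ)) : Prop where
  initCond : ∃ τ, N.SaturateG postA φtop ∅ N.tauInit τ ∧ q0 = (τ, φtop)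
  undefCond : ∀ τ φ t, (¬ N.terrEnabled t τ ∨ ∀ s, ¬ interp (postA φ t) s) →
    δ0 (τ, φ) t = none
  selfCond : ∀ τ φ t, N.terrEnabled t τ → (∃ s, interp (postA φ t) s) →
    N.terrFires τ t τ → postA φ t = φ → δ0 (τ, φ) t = some (τ, φ)
  stepCond : ∀ τ φ t, N.terrEnabled t τ → (∃ s, interp (postA φ t) s) →
    ¬ (N.terrFires τ t τ ∧ postA φ t = φ) →
    ∃ τ', N.SaturateG postA (postA φ t) (N.bystanders t τ) (N.replaceT t τ) τ' ∧
      δ0 (τ, φ) t = some (τ', postA φ t)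

open Classical in
/-- The transition function of the naive empire. -/
noncomputable def naiveδ (D : InvDomain N) (q : Set (Set Place) × (State → Prop))
    (t : Trans) : Option (Set (Set Place) × (State → Prop)) :=
  if N.terrEnabled t q.1 ∧ ∃ s, D.postF q.2 t s then some (N.replaceT t q.1, D.postF q.2 t)
  else none

/-- The naive empire `E_naive(A,post)`: the reachable part of the empire whose states are
pairs of territories and laws, with initial state `⟨τ_init, ⊤⟩`. -/
noncomputable def naiveEmpire (D : InvDomain N) :
    EmpireData Place Trans State
      {q : Set (Set Place) × (State → Prop) //
        EmpReach (N.tauInit, fun _ => True) (N.naiveδ D) q} :=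
  restrictEmpire (N.tauInit, fun _ => True) (N.naiveδ D) Prod.snd Prod.fst

open Classical in
/-- The product post operator of a family of invariant domains, acting on vectors of
component formulas (the vector `φv` represents the conjunction `⋀_i φv i`). -/
noncomputable def prodPost {n : ℕ} (Ds : Fin n → InvDomain N)
    (φv : Fin n → State → Prop) (t : Trans) : Fin n → State → Prop :=
  if ∀ i, ∃ s, (Ds i).postF (φv i) t s then fun i => (Ds i).postF (φv i) t
  else fun _ _ => False

/-- Safety of the product invariant domain. -/
def prodSafe {n : ℕ} (Ds : Fin n → InvDomain N) : Prop :=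
  ∀ m φv, N.AbsReachG (N.prodPost Ds) (fun _ _ => True) m φv →
    (m ∩ N.err).Nonempty → ∀ s, ¬ ∀ i, φv i s

/-- A focus on a saturated empire (given by raw data `(q0, δ0)` over vector laws). -/
structure IsFocus {n : ℕ} (Ds : Fin n → InvDomain N)
    (q0 : Set (Set Place) × (Fin n → State → Prop))
    (δ0 : Set (Set Place) × (Fin n → State → Prop) → Trans →
      Option (Set (Set Place) × (Fin n → State → Prop)))
    (ℓ : Set (Set Place) × (Fin n → State → Prop) → Set Place → Set (Fin n)) :
    Prop where
  safeCond : ∀ q, EmpReach q0 δ0 q → ∀ t, N.terrEnabled t q.1 → δ0 q t = none →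
    ∃ r ∈ q.1, ∃ i, (r ∩ N.pre t).Nonempty ∧ (∀ s, ¬ (Ds i).postF (q.2 i) t s) ∧ i ∈ ℓ q r
  inductiveEdge : ∀ q q' t, EmpReach q0 δ0 q → δ0 q t = some q' →
    ∀ r' ∈ q'.1, (r' ∩ N.post t).Nonempty → ∀ i ∈ ℓ q' r',
      ∃ r ∈ q.1, (r ∩ N.pre t).Nonempty ∧ i ∈ ℓ q r
  bystandersCond : ∀ q q' t, EmpReach q0 δ0 q → δ0 q t = some q' →
    ∀ r ∈ N.bystanders t q.1, ∀ i ∈ ℓ q' r, i ∈ ℓ q r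

end PetriNet

/-- A saturated empire (over scalar laws): the reachable part of the data `(q0, δ0)`. -/
def saturatedEmpire {Place Trans State : Type*}
    (q0 : Set (Set Place) × (State → Prop))
    (δ0 : Set (Set Place) × (State → Prop) → Trans →
      Option (Set (Set Place) × (State → Prop))) :
    EmpireData Place Trans State {q // EmpReach q0 δ0 q} :=
  restrictEmpire q0 δ0 Prod.snd Prod.fst

/-- The focused law `law_p(q) = ⋀ {φ_i | ∃ r ∈ terr(q). i ∈ ℓ(q,r) ∧ p ∈ r}`. -/
def lawP {Place State : Type*} {n : ℕ}
    (ℓ : Set (Set Place) × (Fin n → State → Prop) → Set Place → Set (Fin n))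
    (q : Set (Set Place) × (Fin n → State → Prop)) (p : Place) : State → Prop :=
  fun s => ∀ i, (∃ r ∈ q.1, i ∈ ℓ q r ∧ p ∈ r) → q.2 i s

/-- `law_X(q) = ⋀_{p ∈ X} law_p(q)`. -/
def lawX {Place State : Type*} {n : ℕ}
    (ℓ : Set (Set Place) × (Fin n → State → Prop) → Set Place → Set (Fin n))
    (q : Set (Set Place) × (Fin n → State → Prop)) (X : Set Place) : State → Prop :=
  fun s => ∀ p ∈ X, lawP ℓ q p s

/-- The focused imperial Owicki-Gries annotation `OG_{E,ℓ}` of the saturated empire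
given by `(q0, δ0)` (restricted to its reachable part) with focus `ℓ`:
`ω(p) = ⋁_{q ∈ Q_p} (g = q ∧ law_p(q))`. -/
def focusedOG {Place Trans State : Type*} {n : ℕ}
    (q0 : Set (Set Place) × (Fin n → State → Prop))
    (δ0 : Set (Set Place) × (Fin n → State → Prop) → Trans →
      Option (Set (Set Place) × (Fin n → State → Prop)))
    (ℓ : Set (Set Place) × (Fin n → State → Prop) → Set Place → Set (Fin n)) :
    OG Place Trans State {q // EmpReach q0 δ0 q} where
  ω := fun p s g => ∃ q : {q // EmpReach q0 δ0 q},
    (∃ r ∈ q.val.1, p ∈ r) ∧ g = q ∧ lawP ℓ q.val p s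
  γ := fun t _ g => (restrictδ q0 δ0 g t).getD g
  ρ := ⟨q0, EmpReach.init⟩


/- Auxiliary lemmas for Statement 18. -/
namespace PetriNet

variable {Place Trans Stmt State : Type*} (N : PetriNet Place Trans Stmt State)

/-- Every region of a saturated successor territory is either in `rb` or contains
a region of the starting territory that is not in `rb`. -/
lemma saturate_regions {Φ : Type*} {postA : Φ → Trans → Φ} {φ : Φ}
    {rb τ τ' : Set (Set Place)} (h : N.SaturateG postA φ rb τ τ') :
    ∀ r' ∈ τ', r' ∈ rb ∨ ∃ r ∈ τ, r ∉ rb ∧ r ⊆ r' := by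
  induction h with
  | base _ =>
    intro r' hr'
    by_cases hrb : r' ∈ rb
    · exact Or.inl hrb
    · exact Or.inr ⟨r', hr', hrb, subset_rfl⟩
  | step hext hnf hph hrb _ ih =>
    intro r' hr'
    rcases ih r' hr' with h1 | ⟨rm, hrm, hrmnb, hsub⟩
    · exact Or.inl h1
    · rcases hrm with hby | ⟨r, hrτ, hrne, rfl⟩
      · exact Or.inr ⟨rm, hby.1, hrmnb, hsub⟩
      · refine Or.inr ⟨r, hrτ, ?_, Set.subset_union_left.trans hsub⟩
        intro hrrb
        exact hrne.ne_empty (hrb hrrb).2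

/-- If `δ0 q t` is defined, then `t` is enabled in the territory of `q` and the
product post law is satisfiable. -/
lemma succ_key {n : ℕ} {Ds : Fin n → N.InvDomain}
    {q0 : Set (Set Place) × (Fin n → State → Prop)}
    {δ0 : Set (Set Place) × (Fin n → State → Prop) → Trans →
      Option (Set (Set Place) × (Fin n → State → Prop))}
    (hsat : N.IsSaturatedG (N.prodPost Ds) (fun φv s => ∀ i, φv i s)
      (fun _ _ => True) q0 δ0)
    {q q' : Set (Set Place) × (Fin n → State → Prop)} {t : Trans}
    (hδ : δ0 q t = some q') :
    N.terrEnabled t q.1 ∧ ∃ s, ∀ i, N.prodPost Ds q.2 t i s := by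
  by_contra h
  have hnone : δ0 (q.1, q.2) t = none := hsat.undefCond q.1 q.2 t (by
    rw [not_and_or] at h
    rcases h with h | h
    · exact Or.inl h
    · exact Or.inr fun s hs => h ⟨s, hs⟩)
  exact Option.some_ne_none _ (hδ.symm.trans hnone)

/-- Structure of a successor state in a saturated empire. -/
lemma succ_struct {n : ℕ} {Ds : Fin n → N.InvDomain}
    {q0 : Set (Set Place) × (Fin n → State → Prop)}
    {δ0 : Set (Set Place) × (Fin n → State → Prop) → Trans →
      Option (Set (Set Place) × (Fin n → State → Prop))}
    (hsat : N.IsSaturatedG (N.prodPost Ds) (fun φv s => ∀ i, φv i s)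
      (fun _ _ => True) q0 δ0)
    {q q' : Set (Set Place) × (Fin n → State → Prop)} {t : Trans}
    (hδ : δ0 q t = some q') :
    (q' = q ∧ N.prodPost Ds q.2 t = q.2) ∨
    (q'.2 = N.prodPost Ds q.2 t ∧
      N.SaturateG (N.prodPost Ds) (N.prodPost Ds q.2 t) (N.bystanders t q.1)
        (N.replaceT t q.1) q'.1) := by
  have hkey := N.succ_key hsat hδ
  by_cases hc : N.terrFires q.1 t q.1 ∧ N.prodPost Ds q.2 t = q.2
  · have hself : δ0 (q.1, q.2) t = some (q.1, q.2) :=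
      hsat.selfCond q.1 q.2 t hkey.1 hkey.2 hc.1 hc.2
    have hinj : (q.1, q.2) = q' := Option.some.inj (hself.symm.trans hδ)
    exact Or.inl ⟨hinj.symm, hc.2⟩
  · obtain ⟨τ', hsatg, heq⟩ := hsat.stepCond q.1 q.2 t hkey.1 hkey.2 hc
    have hinj : (τ', N.prodPost Ds q.2 t) = q' := Option.some.inj (heq.symm.trans hδ)
    refine Or.inr ⟨?_, ?_⟩
    · rw [← hinj]
    · rw [← hinj]; exact hsatg

/-- Every component law of a reachable empire state lies in the corresponding domain. -/
lemma reach_mem {n : ℕ} {Ds : Fin n → N.InvDomain}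
    {q0 : Set (Set Place) × (Fin n → State → Prop)}
    {δ0 : Set (Set Place) × (Fin n → State → Prop) → Trans →
      Option (Set (Set Place) × (Fin n → State → Prop))}
    (hsat : N.IsSaturatedG (N.prodPost Ds) (fun φv s => ∀ i, φv i s)
      (fun _ _ => True) q0 δ0)
    {q : Set (Set Place) × (Fin n → State → Prop)} (hq : EmpReach q0 δ0 q) :
    ∀ i, q.2 i ∈ (Ds i).A := by
  induction hq with
  | init =>
    obtain ⟨τ, -, hq0⟩ := hsat.initCond
    intro i
    rw [hq0]
    exact (Ds i).top_mem
  | @step q t q' hq hδ ih =>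
    intro i
    rcases N.succ_struct hsat hδ with ⟨rfl, -⟩ | ⟨h2, -⟩
    · exact ih i
    · rw [h2]
      unfold PetriNet.prodPost
      by_cases hcond : ∀ j, ∃ s, (Ds j).postF (q.2 j) t s
      · rw [if_pos hcond]
        exact (Ds i).post_mem _ (ih i) t
      · rw [if_neg hcond]
        exact (Ds i).bot_mem

end PetriNet


end GhostsOfEmpires
open GhostsOfEmpires in
/-- Let `(A,post)` be a safe product invariant domain, `E` a
corresponding saturated empire, and `ℓ` a focus on `E`. Let `P̂` be a subset of a
reachable marking, `t` a transition with `•t ⊆ P̂`, and `q, q'` states of `E` with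
`δ(q,t) = q'`. Then the Hoare triple `{law_P̂(q)} λ(t) {law_{(P̂\•t)∪t•}(q')}` holds. -/
theorem statement18 {Place Trans Stmt State : Type*}
    [Fintype Place] [Fintype Trans] [Fintype Stmt]
    (N : PetriNet Place Trans Stmt State)
    {n : ℕ} (Ds : Fin n → N.InvDomain) (hsafe : N.prodSafe Ds)
    (q0 : Set (Set Place) × (Fin n → State → Prop))
    (δ0 : Set (Set Place) × (Fin n → State → Prop) → Trans →
      Option (Set (Set Place) × (Fin n → State → Prop)))
    (hsat : N.IsSaturatedG (N.prodPost Ds) (fun φv s => ∀ i, φv i s)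
      (fun _ _ => True) q0 δ0)
    (ℓ : Set (Set Place) × (Fin n → State → Prop) → Set Place → Set (Fin n))
    (hfoc : N.IsFocus Ds q0 δ0 ℓ)
    (Phat : Set Place) (hsub : ∃ m, N.Reachable m ∧ Phat ⊆ m)
    (t : Trans) (hpre : N.pre t ⊆ Phat)
    (q q' : Set (Set Place) × (Fin n → State → Prop))
    (hq : EmpReach q0 δ0 q) (hδ : δ0 q t = some q') :
    N.Hoare (lawX ℓ q Phat) (N.label t)
      (lawX ℓ q' ((Phat \ N.pre t) ∪ N.post t)) := by
  intro s s' hφ hsem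
  have hstruct := N.succ_struct hsat hδ
  have hkey := N.succ_key hsat hδ
  have hif : ∀ i, ∃ s0, (Ds i).postF (q.2 i) t s0 := by
    by_contra hni
    push_neg at hni
    obtain ⟨i, hi⟩ := hni
    obtain ⟨s0, hs0⟩ := hkey.2
    have hcf : ¬ ∀ j, ∃ s1, (Ds j).postF (q.2 j) t s1 := fun h => by
      obtain ⟨s1, hs1⟩ := h i; exact hi s1 hs1
    have hfalse := hs0 i
    unfold PetriNet.prodPost at hfalse
    rw [if_neg hcf] at hfalse
    exact hfalse
  have hpost : N.prodPost Ds q.2 t = fun i => (Ds i).postF (q.2 i) t := by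
    unfold PetriNet.prodPost
    rw [if_pos hif]
  have hmem := N.reach_mem hsat hq
  have hq2' : q'.2 = fun i => (Ds i).postF (q.2 i) t := by
    rcases hstruct with ⟨rfl, h2⟩ | ⟨h2, -⟩
    · exact h2.symm.trans hpost
    · exact h2.trans hpost
  simp only [lawX, lawP] at hφ ⊢
  intro p hp i hex
  obtain ⟨r', hr'1, hiℓ', hpr'⟩ := hex
  have hhoare := (Ds i).post_hoare (q.2 i) (hmem i) t
  suffices hqs : q.2 i s by
    have h3 := hhoare s s' hqs hsem
    have hgi : q'.2 i = (Ds i).postF (q.2 i) t := by rw [hq2']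
    rw [hgi]
    exact h3
  by_cases hint : (r' ∩ N.post t).Nonempty
  · obtain ⟨r, hrτ, ⟨p0, hp0⟩, hiℓ⟩ :=
      hfoc.inductiveEdge q q' t hq hδ r' hr'1 hint i hiℓ'
    exact hφ p0 (hpre hp0.2) i ⟨r, hrτ, hiℓ, hp0.1⟩
  · have hpP : p ∈ Phat := by
      rcases hp with ⟨h1, -⟩ | h2
      · exact h1
      · exact absurd ⟨p, hpr', h2⟩ hint
    rcases hstruct with ⟨rfl, -⟩ | ⟨-, hsatg⟩
    · exact hφ p hpP i ⟨r', hr'1, hiℓ', hpr'⟩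
    · rcases N.saturate_regions hsatg r' hr'1 with hby | ⟨r, hrrep, hrnb, hsub⟩
      · have hiℓq := hfoc.bystandersCond q q' t hq hδ r' hby i hiℓ'
        exact hφ p hpP i ⟨r', hby.1, hiℓq, hpr'⟩
      · exfalso
        rcases hrrep with hb | ⟨p', hp't, rfl⟩
        · exact hrnb hb
        · exact hint ⟨p', hsub rfl, hp't⟩
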